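/- Solvability in the flat case: Let h : V → ℝ with h not identically zero. Then there exists a function u : V → ℝ satisfying −Δu(x) = h(x)e^{u(x)} for all x ∈ V if and only if h changes sign (h is positive somewhere and negative somewhere) and ∫_V h dμ < 0. -/

import Mathlib

open Finset Real

/-- The graph Laplacian: `Δu(x) = (1/μ x) * Σ_y ω x y * (u y - u x)`. -/
noncomputable def graphLap {V : Type*} [Fintype V] (ω : V → V → ℝ) (μ : V → ℝ)
    (u : V → ℝ) (x : V) : ℝ :=
  (1 / μ x) * ∑ y, ω x y * (u y - u x)

/-- The integral of `f` over `V` with respect to the vertex measure `μ`. -/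
noncomputable def graphInt {V : Type*} [Fintype V] (μ : V → ℝ) (f : V → ℝ) : ℝ :=
  ∑ x, f x * μ x

/-- Connectivity: any two distinct vertices are joined by a chain of positively
weighted edges. -/
def graphConn {V : Type*} (ω : V → V → ℝ) : Prop :=
  ∀ x y : V, x ≠ y → ∃ (m : ℕ) (p : ℕ → V), p 0 = x ∧ p m = y ∧
    ∀ i < m, 0 < ω (p i) (p (i + 1))

/-- The gradient form `Γ(u,v)(x)`. -/
noncomputable def graphGamma {V : Type*} [Fintype V] (ω : V → V → ℝ) (μ : V → ℝ)
    (u v : V → ℝ) (x : V) : ℝ :=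
  (1 / (2 * μ x)) * ∑ y, ω x y * (u y - u x) * (v y - v x)

/-- The length of the gradient: `|∇u|(x) = √(Γ(u,u)(x))`. -/
noncomputable def graphGradNorm {V : Type*} [Fintype V] (ω : V → V → ℝ) (μ : V → ℝ)
    (u : V → ℝ) (x : V) : ℝ :=
  Real.sqrt (graphGamma ω μ u u x)

/-- The functional `J_{h,f}(u) = ∫_V (½|∇u|² + f·u − h·e^u) dμ`. -/
noncomputable def Jfunc {V : Type*} [Fintype V] (ω : V → V → ℝ) (μ : V → ℝ)
    (h f : V → ℝ) (u : V → ℝ) : ℝ :=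
  graphInt μ (fun x => (1 / 2) * (graphGradNorm ω μ u x) ^ 2 + f x * u x - h x * Real.exp (u x))

set_option linter.unusedSectionVars false

namespace KW
variable {V : Type*} [Fintype V]

/-- Dirichlet-type energy. -/
noncomputable def D (ω : V → V → ℝ) (u : V → ℝ) : ℝ := ∑ x, ∑ y, ω x y * (u y - u x)^2

/-- Constraint functional. -/
noncomputable def G (h μ : V → ℝ) (u : V → ℝ) : ℝ := ∑ x, h x * Real.exp (u x) * μ x

lemma parts (ω : V → V → ℝ) (hsymm : ∀ x y, ω x y = ω y x) (u v : V → ℝ) :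
    ∑ x, (∑ y, ω x y * (u x - u y)) * v x
      = (1/2) * ∑ x, ∑ y, ω x y * (u x - u y) * (v x - v y) := by
  have h1 : ∑ x, (∑ y, ω x y * (u x - u y)) * v x
      = ∑ x, ∑ y, ω x y * (u x - u y) * v x := by
    refine Finset.sum_congr rfl fun x _ => ?_
    rw [Finset.sum_mul]
  have hswap : ∑ x, ∑ y, ω x y * (u x - u y) * v y
      = - ∑ x, ∑ y, ω x y * (u x - u y) * v x := by
    rw [Finset.sum_comm, ← Finset.sum_neg_distrib]
    refine Finset.sum_congr rfl fun y _ => ?_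
    rw [← Finset.sum_neg_distrib]
    refine Finset.sum_congr rfl fun x _ => ?_
    rw [hsymm x y]; ring
  have hexp : ∑ x, ∑ y, ω x y * (u x - u y) * (v x - v y)
      = ∑ x, ∑ y, ω x y * (u x - u y) * v x - ∑ x, ∑ y, ω x y * (u x - u y) * v y := by
    rw [← Finset.sum_sub_distrib]
    refine Finset.sum_congr rfl fun x _ => ?_
    rw [← Finset.sum_sub_distrib]
    exact Finset.sum_congr rfl fun y _ => by ring
  linarith

lemma const_of_conn {ω : V → V → ℝ} (hconn : graphConn ω) (u : V → ℝ)
    (hE : ∀ x y, 0 < ω x y → u x = u y) : ∀ x y, u x = u y := by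
  intro x y
  by_cases hxy : x = y
  · rw [hxy]
  obtain ⟨m, p, hp0, hpm, hp⟩ := hconn x y hxy
  have key : ∀ i, i ≤ m → u (p 0) = u (p i) := by
    intro i
    induction i with
    | zero => intro _; rfl
    | succ n ih =>
      intro hn
      rw [ih (by omega)]
      exact hE _ _ (hp n (by omega))
  rw [← hp0, ← hpm]
  exact key m le_rfl

lemma D_nonneg {ω : V → V → ℝ} (hnn : ∀ x y, 0 ≤ ω x y) (u : V → ℝ) : 0 ≤ D ω u :=
  Finset.sum_nonneg fun x _ => Finset.sum_nonneg fun y _ =>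
    mul_nonneg (hnn x y) (sq_nonneg _)

lemma term_le_D {ω : V → V → ℝ} (hnn : ∀ x y, 0 ≤ ω x y) (u : V → ℝ) (a b : V) :
    ω a b * (u b - u a)^2 ≤ D ω u := by
  have h1 : ω a b * (u b - u a)^2 ≤ ∑ y, ω a y * (u y - u a)^2 :=
    Finset.single_le_sum (f := fun y => ω a y * (u y - u a)^2)
      (fun y _ => mul_nonneg (hnn a y) (sq_nonneg _)) (Finset.mem_univ b)
  refine h1.trans ?_
  exact Finset.single_le_sum (f := fun x => ∑ y, ω x y * (u y - u x)^2)
    (fun x _ => Finset.sum_nonneg fun y _ => mul_nonneg (hnn x y) (sq_nonneg _))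
    (Finset.mem_univ a)

lemma pair_bound {ω : V → V → ℝ} (hnn : ∀ x y, 0 ≤ ω x y) (hconn : graphConn ω)
    (x y : V) : ∃ C : ℝ, 0 ≤ C ∧ ∀ u : V → ℝ, (u x - u y)^2 ≤ C * D ω u := by
  by_cases hxy : x = y
  · exact ⟨0, le_rfl, fun u => by simp [hxy]⟩
  obtain ⟨m, p, hp0, hpm, hp⟩ := hconn x y hxy
  have hCnn : (0:ℝ) ≤ m * ∑ i ∈ Finset.range m, (ω (p i) (p (i+1)))⁻¹ :=
    mul_nonneg (by positivity) (Finset.sum_nonneg fun i hi =>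
      inv_nonneg.2 (hp i (Finset.mem_range.1 hi)).le)
  refine ⟨m * ∑ i ∈ Finset.range m, (ω (p i) (p (i+1)))⁻¹, hCnn, fun u => ?_⟩
  have hD := D_nonneg hnn u
  have tele : u x - u y = ∑ i ∈ Finset.range m, (u (p i) - u (p (i+1))) := by
    rw [Finset.sum_range_sub' (fun i => u (p i)) m, hp0, hpm]
  have step : ∀ i ∈ Finset.range m, (u (p i) - u (p (i+1)))^2 ≤ (ω (p i) (p (i+1)))⁻¹ * D ω u := by
    intro i hi
    have hω := hp i (Finset.mem_range.1 hi)
    have := term_le_D hnn u (p i) (p (i+1))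
    rw [inv_mul_eq_div, le_div_iff₀ hω]
    calc (u (p i) - u (p (i+1)))^2 * ω (p i) (p (i+1))
        = ω (p i) (p (i+1)) * (u (p (i+1)) - u (p i))^2 := by ring
      _ ≤ D ω u := this
  calc (u x - u y)^2 = (∑ i ∈ Finset.range m, (u (p i) - u (p (i+1))))^2 := by rw [tele]
    _ ≤ (Finset.range m).card * ∑ i ∈ Finset.range m, (u (p i) - u (p (i+1)))^2 :=
        sq_sum_le_card_mul_sum_sq
    _ ≤ m * ∑ i ∈ Finset.range m, (ω (p i) (p (i+1)))⁻¹ * D ω u := by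
        rw [Finset.card_range]
        exact mul_le_mul_of_nonneg_left (Finset.sum_le_sum step) (by positivity)
    _ = (m * ∑ i ∈ Finset.range m, (ω (p i) (p (i+1)))⁻¹) * D ω u := by
        rw [← Finset.sum_mul]; ring

lemma coord_bound {ω : V → V → ℝ} [Nonempty V] (hnn : ∀ x y, 0 ≤ ω x y) (hconn : graphConn ω) :
    ∃ C : ℝ, 0 ≤ C ∧ ∀ u : V → ℝ, (∑ z, u z) = 0 → ∀ x, (u x)^2 ≤ C * D ω u := by
  choose Cp hCp0 hCp using pair_bound hnn hconn
  refine ⟨∑ a, ∑ b, Cp a b, Finset.sum_nonneg fun a _ => Finset.sum_nonneg fun b _ => hCp0 a b,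
    fun u hu x => ?_⟩
  have hD := D_nonneg hnn u
  set Ct := ∑ a : V, ∑ b : V, Cp a b with hCt
  have hpair : ∀ a b : V, (u a - u b)^2 ≤ Ct * D ω u := by
    intro a b
    refine (hCp a b u).trans (mul_le_mul_of_nonneg_right ?_ hD)
    calc Cp a b ≤ ∑ b', Cp a b' :=
        Finset.single_le_sum (fun b' _ => hCp0 a b') (Finset.mem_univ b)
      _ ≤ Ct := Finset.single_le_sum (f := fun a' => ∑ b', Cp a' b')
          (fun a' _ => Finset.sum_nonneg fun b' _ => hCp0 a' b') (Finset.mem_univ a)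
  set n := (Fintype.card V : ℝ) with hn
  have hn0 : 0 < n := by
    simp only [hn]; exact_mod_cast Fintype.card_pos
  have hsum : ∑ z, (u x - u z) = n * u x := by
    rw [Finset.sum_sub_distrib, hu, Finset.sum_const, sub_zero, Finset.card_univ]
    simp [hn, nsmul_eq_mul]
  have h1 : (n * u x)^2 ≤ n * ∑ z, (u x - u z)^2 := by
    rw [← hsum]
    have := sq_sum_le_card_mul_sum_sq (s := (Finset.univ : Finset V))
      (f := fun z => u x - u z)
    simpa [Finset.card_univ, hn] using this
  have h2 : ∑ z, (u x - u z)^2 ≤ n * (Ct * D ω u) := by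
    calc ∑ z, (u x - u z)^2 ≤ ∑ _z : V, Ct * D ω u :=
        Finset.sum_le_sum fun z _ => hpair x z
      _ = n * (Ct * D ω u) := by simp [Finset.sum_const, Finset.card_univ, hn, nsmul_eq_mul]
  have h3 : n^2 * (u x)^2 ≤ n^2 * (Ct * D ω u) := by nlinarith
  exact le_of_mul_le_mul_left (by nlinarith) (by positivity : (0:ℝ) < n^2)

noncomputable def Gd (h μ : V → ℝ) (u : V → ℝ) : (V → ℝ) →L[ℝ] ℝ :=
  ∑ x : V, (h x * Real.exp (u x) * μ x) • ContinuousLinearMap.proj x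

noncomputable def Dd (ω : V → V → ℝ) (u : V → ℝ) : (V → ℝ) →L[ℝ] ℝ :=
  ∑ x : V, ∑ y : V, (ω x y * (2 * (u y - u x))) •
    (ContinuousLinearMap.proj (R := ℝ) (φ := fun _ : V => ℝ) y - ContinuousLinearMap.proj x)

lemma hasStrictFDerivAt_eval (x : V) (u : V → ℝ) :
    HasStrictFDerivAt (fun v : V → ℝ => v x)
      (ContinuousLinearMap.proj (R := ℝ) (φ := fun _ : V => ℝ) x) u := by
  have h := (ContinuousLinearMap.proj (R := ℝ) (φ := fun _ : V => ℝ) x).hasStrictFDerivAt (x := u)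
  exact h

lemma G_hasStrictFDerivAt (h μ : V → ℝ) (u : V → ℝ) :
    HasStrictFDerivAt (G h μ) (Gd h μ u) u := by
  unfold G Gd
  refine HasStrictFDerivAt.fun_sum fun x _ => ?_
  have hexp : HasStrictFDerivAt (fun v : V → ℝ => Real.exp (v x))
      (Real.exp (u x) • ContinuousLinearMap.proj (R := ℝ) (φ := fun _ : V => ℝ) x) u := by
    exact HasStrictDerivAt.comp_hasStrictFDerivAt (𝕜 := ℝ) u
      (Real.hasStrictDerivAt_exp (u x)) (hasStrictFDerivAt_eval x u)
  have := (hexp.const_mul (h x)).mul_const (μ x)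
  refine this.congr_fderiv ?_
  rw [smul_smul, smul_smul]
  ring_nf

lemma D_hasStrictFDerivAt (ω : V → V → ℝ) (u : V → ℝ) :
    HasStrictFDerivAt (D ω) (Dd ω u) u := by
  unfold D Dd
  refine HasStrictFDerivAt.fun_sum fun x _ => HasStrictFDerivAt.fun_sum fun y _ => ?_
  have hlin : HasStrictFDerivAt (fun v : V → ℝ => v y - v x)
      (ContinuousLinearMap.proj (R := ℝ) (φ := fun _ : V => ℝ) y - ContinuousLinearMap.proj x) u :=
    (hasStrictFDerivAt_eval y u).sub (hasStrictFDerivAt_eval x u)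
  have hsq : HasStrictFDerivAt (fun v : V → ℝ => (v y - v x)^2)
      ((2 * (u y - u x)) • (ContinuousLinearMap.proj (R := ℝ) (φ := fun _ : V => ℝ) y
        - ContinuousLinearMap.proj x)) u := by
    have := (hasStrictDerivAt_pow 2 (u y - u x)).comp_hasStrictFDerivAt u hlin
    simp at this
    exact this
  have := hsq.const_mul (ω x y)
  refine this.congr_fderiv ?_
  rw [smul_smul]

lemma Gd_apply [DecidableEq V] (h μ : V → ℝ) (u : V → ℝ) (z : V) :
    Gd h μ u (Pi.single z 1) = h z * Real.exp (u z) * μ z := by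
  unfold Gd
  rw [ContinuousLinearMap.sum_apply]
  simp only [ContinuousLinearMap.smul_apply, ContinuousLinearMap.proj_apply, Pi.single_apply,
    smul_eq_mul, mul_ite, mul_one, mul_zero]
  rw [Finset.sum_ite_eq' Finset.univ z]
  simp

lemma Dd_apply [DecidableEq V] (ω : V → V → ℝ) (hsymm : ∀ x y, ω x y = ω y x)
    (u : V → ℝ) (z : V) :
    Dd ω u (Pi.single z 1) = 4 * ∑ y, ω z y * (u z - u y) := by
  unfold Dd
  rw [ContinuousLinearMap.sum_apply]
  simp only [ContinuousLinearMap.sum_apply, ContinuousLinearMap.smul_apply,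
    ContinuousLinearMap.sub_apply, ContinuousLinearMap.proj_apply, Pi.single_apply,
    smul_eq_mul]
  have key : ∀ (f : V → ℝ) (x : V),
      ∑ y, f y * ((if y = z then (1:ℝ) else 0) - (if x = z then (1:ℝ) else 0))
      = (∑ y, if y = z then f y else 0) - (if x = z then ∑ y, f y else 0) := by
    intro f x
    by_cases hx : x = z
    · rw [if_pos hx, if_pos hx, ← Finset.sum_sub_distrib]
      exact Finset.sum_congr rfl fun y _ => by by_cases hy : y = z <;> simp [hy]
    · simp only [if_neg hx, sub_zero]
      exact Finset.sum_congr rfl fun y _ => by by_cases hy : y = z <;> simp [hy]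
  have this1 : ∀ x : V, ∑ y : V, ω x y * (2 * (u y - u x)) * ((if y = z then (1:ℝ) else 0) - (if x = z then (1:ℝ) else 0))
      = ω x z * (2 * (u z - u x)) - (if x = z then ∑ y, ω x y * (2 * (u y - u x)) else 0) := by
    intro x
    rw [key (fun y => ω x y * (2 * (u y - u x))) x, Finset.sum_ite_eq' Finset.univ z]
    simp
  rw [Finset.sum_congr rfl fun x _ => this1 x]
  rw [Finset.sum_sub_distrib, Finset.sum_ite_eq' Finset.univ z]
  simp only [Finset.mem_univ, if_true]
  have h1 : ∑ x, ω x z * (2 * (u z - u x)) = 2 * ∑ y, ω z y * (u z - u y) := by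
    rw [Finset.mul_sum]
    exact Finset.sum_congr rfl fun x _ => by rw [hsymm x z]; ring
  have h2 : ∑ y, ω z y * (2 * (u y - u z)) = -(2 * ∑ y, ω z y * (u z - u y)) := by
    rw [Finset.mul_sum, ← Finset.sum_neg_distrib]
    exact Finset.sum_congr rfl fun y _ => by ring
  rw [h1, h2]
  ring

lemma D_continuous (ω : V → V → ℝ) : Continuous (D ω) :=
  continuous_finset_sum _ fun x _ => continuous_finset_sum _ fun y _ =>
    continuous_const.mul (((continuous_apply y).sub (continuous_apply x)).pow 2)

lemma G_continuous (h μ : V → ℝ) : Continuous (G h μ) :=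
  continuous_finset_sum _ fun x _ =>
    ((continuous_const.mul (Real.continuous_exp.comp (continuous_apply x))).mul continuous_const)

lemma D_shift (ω : V → V → ℝ) (u : V → ℝ) (c : ℝ) :
    D ω (fun x => u x - c) = D ω u := by
  unfold D
  exact Finset.sum_congr rfl fun x _ => Finset.sum_congr rfl fun y _ => by ring_nf

lemma G_shift (h μ : V → ℝ) (u : V → ℝ) (c : ℝ) :
    G h μ (fun x => u x - c) = Real.exp (-c) * G h μ u := by
  unfold G
  rw [Finset.mul_sum]
  refine Finset.sum_congr rfl fun x _ => ?_
  show h x * Real.exp (u x - c) * μ x = Real.exp (-c) * (h x * Real.exp (u x) * μ x)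
  rw [show u x - c = -c + u x by ring, Real.exp_add]
  ring

lemma key_ineq (s t : ℝ) : (s - t) * (Real.exp (-s) - Real.exp (-t)) ≤ 0 := by
  rcases le_total s t with hst | hst
  · apply mul_nonpos_iff.2 (Or.inr ⟨by linarith, ?_⟩)
    rw [sub_nonneg, Real.exp_le_exp]
    linarith
  · apply mul_nonpos_iff.2 (Or.inl ⟨by linarith, ?_⟩)
    rw [sub_nonpos, Real.exp_le_exp]
    linarith

lemma key_strict {s t : ℝ} (hst : s ≠ t)
    (h0 : (s - t) * (Real.exp (-s) - Real.exp (-t)) = 0) : False := by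
  rcases lt_or_gt_of_ne hst with hlt | hlt
  · have h1 : s - t < 0 := by linarith
    have h2 : 0 < Real.exp (-s) - Real.exp (-t) := by
      rw [sub_pos, Real.exp_lt_exp]; linarith
    nlinarith
  · have h1 : 0 < s - t := by linarith
    have h2 : Real.exp (-s) - Real.exp (-t) < 0 := by
      rw [sub_neg, Real.exp_lt_exp]; linarith
    nlinarith

/-- Existence of solutions under the sign conditions. -/
lemma exists_solution [Nonempty V] (ω : V → V → ℝ) (μ h : V → ℝ)
    (hsymm : ∀ x y, ω x y = ω y x) (hnonneg : ∀ x y, 0 ≤ ω x y)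
    (hconn : graphConn ω) (hμ : ∀ x, 0 < μ x)
    (hpos : ∃ x, 0 < h x) (hneg : ∃ x, h x < 0)
    (hint : ∑ x, h x * μ x < 0) :
    ∃ u : V → ℝ, ∀ x, ∑ y, ω x y * (u x - u y) = μ x * (h x * Real.exp (u x)) := by
  classical
  -- Step 1: find u2 with G u2 = 0 and mean zero
  set P : Finset V := Finset.univ.filter (fun x => 0 < h x) with hP
  set A : ℝ := ∑ x ∈ P, h x * μ x with hA_def
  set B : ℝ := ∑ x ∈ Pᶜ, h x * μ x with hB_def
  obtain ⟨xp, hxp⟩ := hpos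
  obtain ⟨xm, hxm⟩ := hneg
  have hA : 0 < A := by
    refine Finset.sum_pos (fun x hx => mul_pos ?_ (hμ x)) ⟨xp, ?_⟩
    · exact (Finset.mem_filter.1 hx).2
    · exact Finset.mem_filter.2 ⟨Finset.mem_univ xp, hxp⟩
  have hB : B < 0 := by
    have h1 : ∑ x ∈ Pᶜ, h x * μ x < ∑ _x ∈ Pᶜ, (0:ℝ) := by
      refine Finset.sum_lt_sum (fun i hi => ?_) ⟨xm, ?_, ?_⟩
      · have : ¬ 0 < h i := by
          intro hpos'
          exact (Finset.mem_compl.1 hi) (by simp [hP, hpos'])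
        exact mul_nonpos_iff.2 (Or.inr ⟨not_lt.1 this, (hμ i).le⟩)
      · rw [Finset.mem_compl, hP, Finset.mem_filter]
        push_neg
        intro _
        exact hxm.le
      · exact mul_neg_of_neg_of_pos hxm (hμ xm)
    simpa using h1
  set t : ℝ := Real.log (-B / A) with ht_def
  have het : Real.exp t = -B / A := Real.exp_log (div_pos (neg_pos.2 hB) hA)
  set u1 : V → ℝ := fun x => if x ∈ P then t else 0 with hu1
  have hG1 : G h μ u1 = 0 := by
    unfold G
    rw [← Finset.sum_add_sum_compl P]
    have e1 : ∑ x ∈ P, h x * Real.exp (u1 x) * μ x = Real.exp t * A := by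
      rw [hA_def, Finset.mul_sum]
      refine Finset.sum_congr rfl fun x hx => ?_
      rw [hu1]; simp only [if_pos hx]; ring
    have e2 : ∑ x ∈ Pᶜ, h x * Real.exp (u1 x) * μ x = B := by
      rw [hB_def]
      refine Finset.sum_congr rfl fun x hx => ?_
      rw [hu1]; simp only [if_neg (Finset.mem_compl.1 hx), Real.exp_zero]; ring
    rw [e1, e2, het]
    field_simp
    ring
  set n : ℝ := (Fintype.card V : ℝ) with hn
  have hn0 : 0 < n := by simp only [hn]; exact_mod_cast Fintype.card_pos
  set c : ℝ := (∑ x, u1 x) / n with hc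
  set u2 : V → ℝ := fun x => u1 x - c with hu2
  have hmean2 : ∑ x, u2 x = 0 := by
    rw [hu2]
    simp only [Finset.sum_sub_distrib, Finset.sum_const, Finset.card_univ, nsmul_eq_mul]
    rw [hc]
    field_simp
    rw [hn]; ring
  have hG2 : G h μ u2 = 0 := by rw [hu2, G_shift, hG1, mul_zero]
  -- Step 2: minimize D on the compact set T
  obtain ⟨C, hC0, hCb⟩ := coord_bound hnonneg hconn
  set T : Set (V → ℝ) := {u | G h μ u = 0 ∧ (∑ z, u z) = 0 ∧ D ω u ≤ D ω u2} with hT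
  set R : ℝ := Real.sqrt (C * D ω u2) with hR
  have hsub : T ⊆ Set.univ.pi (fun _ : V => Set.Icc (-R) R) := by
    rintro u ⟨h1, h2, h3⟩ x _
    have hx2 : (u x)^2 ≤ R^2 := by
      rw [hR, Real.sq_sqrt (mul_nonneg hC0 (D_nonneg hnonneg u2))]
      exact (hCb u h2 x).trans (mul_le_mul_of_nonneg_left h3 hC0)
    have habs : |u x| ≤ R := by
      rw [← Real.sqrt_sq_eq_abs]
      calc Real.sqrt ((u x)^2) ≤ Real.sqrt (R^2) := Real.sqrt_le_sqrt hx2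
        _ = R := Real.sqrt_sq (Real.sqrt_nonneg _)
    exact Set.mem_Icc.2 (abs_le.1 habs)
  have hclosed : IsClosed T := by
    rw [hT, show {u : V → ℝ | G h μ u = 0 ∧ (∑ z, u z) = 0 ∧ D ω u ≤ D ω u2}
        = {u | G h μ u = 0} ∩ ({u : V → ℝ | (∑ z, u z) = 0} ∩ {u | D ω u ≤ D ω u2}) from rfl]
    refine (isClosed_eq (G_continuous h μ) continuous_const).inter
      ((isClosed_eq (continuous_finset_sum _ fun x _ => continuous_apply x) continuous_const).inter
        (isClosed_le (D_continuous ω) continuous_const))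
  have hcomp : IsCompact T :=
    IsCompact.of_isClosed_subset (isCompact_univ_pi fun _ => isCompact_Icc) hclosed hsub
  have hu2T : u2 ∈ T := ⟨hG2, hmean2, le_rfl⟩
  obtain ⟨u₀, hu₀T, hmin⟩ := hcomp.exists_isMinOn ⟨u2, hu2T⟩ (D_continuous ω).continuousOn
  obtain ⟨hGu₀, hmean₀, hDu₀⟩ := hu₀T
  -- Step 3: u₀ is a global minimum of D on {G = 0}
  have hglob : ∀ v : V → ℝ, G h μ v = 0 → D ω u₀ ≤ D ω v := by
    intro v hv
    set c' : ℝ := (∑ x, v x) / n with hc'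
    set w : V → ℝ := fun x => v x - c' with hw
    have hDw : D ω w = D ω v := D_shift ω v c'
    have hmw : ∑ x, w x = 0 := by
      rw [hw]
      simp only [Finset.sum_sub_distrib, Finset.sum_const, Finset.card_univ, nsmul_eq_mul]
      rw [hc']
      field_simp
      rw [hn]; ring
    have hGw : G h μ w = 0 := by rw [hw, G_shift, hv, mul_zero]
    by_cases hle : D ω w ≤ D ω u2
    · have := hmin ⟨hGw, hmw, hle⟩
      simpa [hDw] using this
    · push_neg at hle
      linarith [hDw]
  -- Step 4: Lagrange multipliers
  have hextr : IsLocalExtrOn (D ω) {u : V → ℝ | G h μ u = G h μ u₀} u₀ := by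
    have hset : {u : V → ℝ | G h μ u = G h μ u₀} = {u | G h μ u = 0} := by
      rw [hGu₀]
    rw [hset]
    exact Or.inl (IsMinOn.localize (isMinOn_iff.2 fun v hv => hglob v hv))
  obtain ⟨a, b, hab, heq⟩ := hextr.exists_multipliers_of_hasStrictFDerivAt_1d
    (G_hasStrictFDerivAt h μ u₀) (D_hasStrictFDerivAt ω u₀)
  have hEv : ∀ z, a * (h z * Real.exp (u₀ z) * μ z)
      + b * (4 * ∑ y, ω z y * (u₀ z - u₀ y)) = 0 := by
    intro z
    have h1 := DFunLike.congr_fun heq (Pi.single z 1)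
    simpa [ContinuousLinearMap.add_apply, ContinuousLinearMap.smul_apply,
      Gd_apply, Dd_apply ω hsymm, smul_eq_mul] using h1
  have hb : b ≠ 0 := by
    intro hb0
    have ha : a ≠ 0 := by
      intro ha0
      exact hab (by simp [Prod.ext_iff, ha0, hb0])
    have h1 := hEv xp
    rw [hb0] at h1
    have h2 : 0 < h xp * Real.exp (u₀ xp) * μ xp :=
      mul_pos (mul_pos hxp (Real.exp_pos _)) (hμ xp)
    have h3 : a * (h xp * Real.exp (u₀ xp) * μ xp) = 0 := by linarith
    exact (mul_ne_zero ha h2.ne') h3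
  set κ : ℝ := -a / (4 * b) with hκ
  have hk : ∀ z, ∑ y, ω z y * (u₀ z - u₀ y) = κ * (h z * Real.exp (u₀ z) * μ z) := by
    intro z
    have h1 := hEv z
    rw [hκ]
    field_simp
    linarith
  -- Step 5: sign of κ
  have hsum_np : κ * (∑ z, h z * μ z) ≤ 0 := by
    have e2 : κ * (∑ z, h z * μ z)
        = ∑ z, (∑ y, ω z y * (u₀ z - u₀ y)) * Real.exp (-(u₀ z)) := by
      rw [Finset.mul_sum]
      refine Finset.sum_congr rfl fun z _ => ?_
      rw [hk z]
      have hh : Real.exp (u₀ z) * Real.exp (-(u₀ z)) = 1 := by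
        rw [← Real.exp_add]; simp
      linear_combination (-(κ * h z * μ z)) * hh
    rw [e2, parts ω hsymm u₀ (fun z => Real.exp (-(u₀ z)))]
    have hs : ∑ z, ∑ y, ω z y * (u₀ z - u₀ y) * (Real.exp (-(u₀ z)) - Real.exp (-(u₀ y))) ≤ 0 := by
      refine Finset.sum_nonpos fun z _ => Finset.sum_nonpos fun y _ => ?_
      rw [mul_assoc]
      exact mul_nonpos_iff.2 (Or.inl ⟨hnonneg z y, key_ineq (u₀ z) (u₀ y)⟩)
    linarith
  have hκ0 : κ ≠ 0 := by
    intro hκz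
    have hzero : ∀ z, ∑ y, ω z y * (u₀ z - u₀ y) = 0 := by
      intro z; rw [hk z, hκz]; ring
    have hzsum : ∑ z, (∑ y, ω z y * (u₀ z - u₀ y)) * u₀ z = 0 := by
      refine Finset.sum_eq_zero fun z _ => by rw [hzero z, zero_mul]
    rw [parts ω hsymm u₀ u₀] at hzsum
    have hterms : ∀ z ∈ Finset.univ, ∀ y ∈ (Finset.univ : Finset V),
        ω z y * (u₀ z - u₀ y) * (u₀ z - u₀ y) = 0 := by
      have hsum0 : ∑ z, ∑ y, ω z y * (u₀ z - u₀ y) * (u₀ z - u₀ y) = 0 := by linarith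
      have hnn' : ∀ z ∈ (Finset.univ : Finset V),
          (0:ℝ) ≤ ∑ y, ω z y * (u₀ z - u₀ y) * (u₀ z - u₀ y) := by
        intro z _
        refine Finset.sum_nonneg fun y _ => ?_
        rw [mul_assoc]
        exact mul_nonneg (hnonneg z y) (mul_self_nonneg _)
      intro z hz y hy
      have h1 := (Finset.sum_eq_zero_iff_of_nonneg hnn').1 (by linarith) z hz
      have hnn'' : ∀ y ∈ (Finset.univ : Finset V),
          (0:ℝ) ≤ ω z y * (u₀ z - u₀ y) * (u₀ z - u₀ y) := by
        intro y' _
        rw [mul_assoc]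
        exact mul_nonneg (hnonneg z y') (mul_self_nonneg _)
      exact (Finset.sum_eq_zero_iff_of_nonneg hnn'').1 h1 y hy
    have hconst : ∀ x y, u₀ x = u₀ y := by
      refine const_of_conn hconn u₀ fun x y hω => ?_
      have hterm := hterms x (Finset.mem_univ x) y (Finset.mem_univ y)
      have hd : u₀ x - u₀ y = 0 := by
        rcases mul_eq_zero.1 hterm with h1 | h1
        · rcases mul_eq_zero.1 h1 with h2 | h2
          · exact absurd h2 hω.ne'
          · exact h2
        · exact h1
      linarith [sub_eq_zero.1 hd]
    obtain x0 := Classical.arbitrary V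
    have hGc : G h μ u₀ = Real.exp (u₀ x0) * ∑ x, h x * μ x := by
      unfold G
      rw [Finset.mul_sum]
      refine Finset.sum_congr rfl fun x _ => ?_
      rw [hconst x x0]; ring
    rw [hGc] at hGu₀
    have : Real.exp (u₀ x0) * ∑ x, h x * μ x < 0 :=
      mul_neg_of_pos_of_neg (Real.exp_pos _) hint
    linarith
  have hκpos : 0 < κ := by
    rcases lt_trichotomy κ 0 with hlt | heq0 | hgt
    · nlinarith
    · exact absurd heq0 hκ0
    · exact hgt
  -- Step 6: conclusion
  refine ⟨fun x => u₀ x + Real.log κ, fun x => ?_⟩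
  calc ∑ y, ω x y * ((u₀ x + Real.log κ) - (u₀ y + Real.log κ))
      = ∑ y, ω x y * (u₀ x - u₀ y) := by
        refine Finset.sum_congr rfl fun y _ => by ring_nf
    _ = κ * (h x * Real.exp (u₀ x) * μ x) := hk x
    _ = μ x * (h x * Real.exp (u₀ x + Real.log κ)) := by
        rw [Real.exp_add, Real.exp_log hκpos]; ring

end KW

/-- Solvability in the flat case: for `h` not identically zero, the equation
`−Δu = h e^u` is solvable if and only if `h` changes sign and `∫_V h dμ < 0`. -/
theorem kazdan_warner_flat_case {V : Type*} [Fintype V] [Nonempty V]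
    (ω : V → V → ℝ) (μ : V → ℝ)
    (hsymm : ∀ x y, ω x y = ω y x)
    (hnonneg : ∀ x y, 0 ≤ ω x y)
    (hconn : graphConn ω)
    (hμ : ∀ x, 0 < μ x)
    (h : V → ℝ) (hne : ∃ x, h x ≠ 0) :
    (∃ u : V → ℝ, ∀ x, -graphLap ω μ u x = h x * Real.exp (u x)) ↔
      ((∃ x, 0 < h x) ∧ (∃ x, h x < 0) ∧ graphInt μ h < 0) := by
  classical
  have lap_form : ∀ (u : V → ℝ) (x : V),
      μ x * (-graphLap ω μ u x) = ∑ y, ω x y * (u x - u y) := by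
    intro u x
    unfold graphLap
    have hμx : μ x ≠ 0 := (hμ x).ne'
    have h2 : ∑ y, ω x y * (u x - u y) = -∑ y, ω x y * (u y - u x) := by
      rw [← Finset.sum_neg_distrib]
      exact Finset.sum_congr rfl fun y _ => by ring
    rw [h2]
    field_simp
  constructor
  · rintro ⟨u, hu⟩
    have hs : ∀ x, ∑ y, ω x y * (u x - u y) = μ x * (h x * Real.exp (u x)) := by
      intro x
      rw [← lap_form u x, hu x]
    -- total integral of h e^u is zero
    have htot : ∑ x, μ x * (h x * Real.exp (u x)) = 0 := by
      have h1 : ∑ x, (∑ y, ω x y * (u x - u y)) * (fun _ : V => (1:ℝ)) x = 0 := by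
        rw [KW.parts ω hsymm u (fun _ => (1:ℝ))]
        simp
      simp only [mul_one] at h1
      rw [← h1]
      exact Finset.sum_congr rfl fun x _ => (hs x).symm
    -- sign conditions
    obtain ⟨x₀, hx₀⟩ := hne
    have hsstep : ∀ x, (0 < h x ↔ 0 < μ x * (h x * Real.exp (u x)))
        ∧ (h x < 0 ↔ μ x * (h x * Real.exp (u x)) < 0) := by
      intro x
      have he := Real.exp_pos (u x)
      have hμx := hμ x
      constructor
      · constructor
        · intro hh; exact mul_pos hμx (mul_pos hh he)
        · intro hh
          by_contra hc
          push_neg at hc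
          have : μ x * (h x * Real.exp (u x)) ≤ 0 :=
            mul_nonpos_iff.2 (Or.inl ⟨hμx.le, mul_nonpos_iff.2 (Or.inr ⟨hc, he.le⟩)⟩)
          linarith
      · constructor
        · intro hh; exact mul_neg_of_pos_of_neg hμx (mul_neg_of_neg_of_pos hh he)
        · intro hh
          by_contra hc
          push_neg at hc
          have : 0 ≤ μ x * (h x * Real.exp (u x)) :=
            mul_nonneg hμx.le (mul_nonneg hc he.le)
          linarith
    have hsne : μ x₀ * (h x₀ * Real.exp (u x₀)) ≠ 0 :=
      mul_ne_zero (hμ x₀).ne' (mul_ne_zero hx₀ (Real.exp_pos _).ne')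
    have hexpos : ∃ x, 0 < h x := by
      by_contra hnp
      push_neg at hnp
      have hall : ∀ x ∈ Finset.univ, μ x * (h x * Real.exp (u x)) ≤ (0:ℝ) := by
        intro x _
        exact mul_nonpos_iff.2 (Or.inl ⟨(hμ x).le,
          mul_nonpos_iff.2 (Or.inr ⟨hnp x, (Real.exp_pos (u x)).le⟩)⟩)
      have hlt : μ x₀ * (h x₀ * Real.exp (u x₀)) < 0 :=
        lt_of_le_of_ne (hall x₀ (Finset.mem_univ x₀)) hsne
      have : ∑ x, μ x * (h x * Real.exp (u x)) < ∑ _x : V, (0:ℝ) :=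
        Finset.sum_lt_sum hall ⟨x₀, Finset.mem_univ x₀, hlt⟩
      simp only [Finset.sum_const, smul_zero] at this
      linarith [htot]
    have hexneg : ∃ x, h x < 0 := by
      by_contra hnn'
      push_neg at hnn'
      have hall : ∀ x ∈ Finset.univ, (0:ℝ) ≤ μ x * (h x * Real.exp (u x)) := by
        intro x _
        exact mul_nonneg (hμ x).le (mul_nonneg (hnn' x) (Real.exp_pos (u x)).le)
      have hgt : 0 < μ x₀ * (h x₀ * Real.exp (u x₀)) :=
        lt_of_le_of_ne (hall x₀ (Finset.mem_univ x₀)) (Ne.symm hsne)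
      have : ∑ _x : V, (0:ℝ) < ∑ x, μ x * (h x * Real.exp (u x)) :=
        Finset.sum_lt_sum hall ⟨x₀, Finset.mem_univ x₀, hgt⟩
      simp only [Finset.sum_const, smul_zero] at this
      linarith [htot]
    refine ⟨hexpos, hexneg, ?_⟩
    -- the integral is negative
    unfold graphInt
    have e2 : ∑ x, h x * μ x = ∑ x, (∑ y, ω x y * (u x - u y)) * Real.exp (-(u x)) := by
      refine Finset.sum_congr rfl fun x _ => ?_
      rw [hs x]
      have hh : Real.exp (u x) * Real.exp (-(u x)) = 1 := by
        rw [← Real.exp_add]; simp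
      linear_combination (-(h x * μ x)) * hh
    have key := KW.parts ω hsymm u (fun x => Real.exp (-(u x)))
    have hle : ∑ x, h x * μ x ≤ 0 := by
      rw [e2, key]
      have hs' : ∑ x, ∑ y, ω x y * (u x - u y) * (Real.exp (-(u x)) - Real.exp (-(u y))) ≤ 0 := by
        refine Finset.sum_nonpos fun x _ => Finset.sum_nonpos fun y _ => ?_
        rw [mul_assoc]
        exact mul_nonpos_iff.2 (Or.inl ⟨hnonneg x y, KW.key_ineq (u x) (u y)⟩)
      linarith
    have hne2 : ∑ x, h x * μ x ≠ 0 := by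
      intro h0
      rw [e2, key] at h0
      have hsum0 : ∑ x, ∑ y, ω x y * (u x - u y) * (Real.exp (-(u x)) - Real.exp (-(u y))) = 0 := by
        linarith
      have hterms := (Finset.sum_eq_zero_iff_of_nonpos (fun x _ =>
        Finset.sum_nonpos fun y _ => by
          rw [mul_assoc]
          exact mul_nonpos_iff.2 (Or.inl ⟨hnonneg x y, KW.key_ineq (u x) (u y)⟩))).1 hsum0
      have hterms2 : ∀ x y : V, ω x y * ((u x - u y) * (Real.exp (-(u x)) - Real.exp (-(u y)))) = 0 := by
        intro x y
        have h1 := hterms x (Finset.mem_univ x)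
        have h2 := (Finset.sum_eq_zero_iff_of_nonpos (fun y' _ => by
          rw [mul_assoc]
          exact mul_nonpos_iff.2 (Or.inl ⟨hnonneg x y', KW.key_ineq (u x) (u y')⟩))).1 h1 y
          (Finset.mem_univ y)
        rw [← mul_assoc]
        exact h2
      have hconst : ∀ x y, u x = u y := by
        refine KW.const_of_conn hconn u fun x y hω => ?_
        by_contra hne'
        have h1 := hterms2 x y
        rcases mul_eq_zero.1 h1 with h2 | h2
        · exact hω.ne' h2
        · exact KW.key_strict hne' h2
      have hharm : ∀ x, ∑ y, ω x y * (u x - u y) = 0 := by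
        intro x
        refine Finset.sum_eq_zero fun y _ => ?_
        rw [hconst x y]; ring
      have hzero : ∀ x, h x = 0 := by
        intro x
        have h1 := hs x
        rw [hharm x] at h1
        rcases mul_eq_zero.1 h1.symm with h2 | h2
        · exact absurd h2 (hμ x).ne'
        · rcases mul_eq_zero.1 h2 with h3 | h3
          · exact h3
          · exact absurd h3 (Real.exp_pos _).ne'
      exact hx₀ (hzero x₀)
    exact lt_of_le_of_ne hle hne2
  · rintro ⟨hpos, hneg, hint⟩
    have hint' : ∑ x, h x * μ x < 0 := hint
    obtain ⟨u, hu⟩ := KW.exists_solution ω μ h hsymm hnonneg hconn hμ hpos hneg hint'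
    refine ⟨u, fun x => ?_⟩
    have h1 : μ x * (-graphLap ω μ u x) = μ x * (h x * Real.exp (u x)) := by
      rw [lap_form u x, hu x]
    exact mul_left_cancel₀ (hμ x).ne' h1
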